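/- Let |γ| < 1 and let Γ ∈ ℝ satisfy Γ_− < Γ < Γ_+, where Γ_± = (1 ± √(1−γ²))/2. Define G_γ(w) = Γ(1−Γ) f₁(w) − (1/4) f_γ(w) on (0,1], where f_γ(w) = w^γ − 2 + w^{−γ} and f₁(w) = w − 2 + w^{−1}. Then G_γ(1) = G_γ'(1) = 0, G_γ is strictly convex on (0,1], and consequently G_γ(w) > 0 for all w ∈ (0,1). -/

import Mathlib

open Set

noncomputable section

private lemma rpow_deriv {p x : ℝ} (hx : 0 < x) :
    HasDerivAt (fun w : ℝ => w ^ p) (p * x ^ (p - 1)) x :=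
  Real.hasDerivAt_rpow_const (Or.inl hx.ne')

private lemma key_ineq {a : ℝ} (ha : |a| < 1) {t : ℝ} (ht : t ∈ Ioc (0:ℝ) 1) :
    a*(a-1)*t^(1+a) + a*(a+1)*t^(1-a) ≤ 2*a^2 := by
  obtain ⟨ha1, ha2⟩ := abs_lt.mp ha
  set h : ℝ → ℝ := fun t => 2*a^2 - a*(a-1)*t^(1+a) - a*(a+1)*t^(1-a) with hh
  have hd : ∀ x ∈ Ioi (0:ℝ), HasDerivAt h (a*(1-a^2)*(x^a - x^(-a))) x := by
    intro x hx
    have h1 := (rpow_deriv (p := 1+a) hx).const_mul (a*(a-1))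
    have h2 := (rpow_deriv (p := 1-a) hx).const_mul (a*(a+1))
    have hthis := ((hasDerivAt_const x (2*a^2)).sub h1).sub h2
    have e1 : (1:ℝ) + a - 1 = a := by ring
    have e2 : (1:ℝ) - a - 1 = -a := by ring
    rw [e1, e2] at hthis
    refine hthis.congr_deriv ?_
    ring
  have hanti : AntitoneOn h (Ioc (0:ℝ) 1) := by
    apply antitoneOn_of_deriv_nonpos (convex_Ioc 0 1)
    · intro x hx
      exact (hd x hx.1).differentiableAt.continuousAt.continuousWithinAt
    · rw [interior_Ioc]
      intro x hx
      exact (hd x hx.1).differentiableAt.differentiableWithinAt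
    · rw [interior_Ioc]
      intro x hx
      rw [(hd x hx.1).deriv]
      have h1a : 0 < 1 - a^2 := by nlinarith
      rcases lt_trichotomy a 0 with hA|hA|hA
      · have hlt : x^(-a) < x^a :=
          Real.rpow_lt_rpow_of_exponent_gt hx.1 hx.2 (by linarith)
        have := mul_pos (mul_pos (neg_pos.mpr hA) h1a) (sub_pos.mpr hlt)
        nlinarith
      · simp [hA]
      · have hlt : x^a < x^(-a) :=
          Real.rpow_lt_rpow_of_exponent_gt hx.1 hx.2 (by linarith)
        have := mul_pos (mul_pos hA h1a) (sub_pos.mpr hlt)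
        nlinarith
  have h1mem : (1:ℝ) ∈ Ioc (0:ℝ) 1 := right_mem_Ioc.mpr one_pos
  have := hanti ht h1mem ht.2
  have hv1 : h 1 = 0 := by simp [hh]; ring
  have hvt : h t = 2*a^2 - a*(a-1)*t^(1+a) - a*(a+1)*t^(1-a) := rfl
  rw [hv1, hvt] at this
  linarith

theorem Ggamma_strictConvexOn_and_pos (γ Γ : ℝ) (hγ : |γ| < 1)
    (hΓlow : (1 - Real.sqrt (1 - γ ^ 2)) / 2 < Γ)
    (hΓhigh : Γ < (1 + Real.sqrt (1 - γ ^ 2)) / 2)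
    (G : ℝ → ℝ)
    (hG : G = fun w => Γ * (1 - Γ) * (w - 2 + w⁻¹) - (1 / 4) * (w ^ γ - 2 + w ^ (-γ))) :
    G 1 = 0 ∧ deriv G 1 = 0 ∧ StrictConvexOn ℝ (Ioc (0:ℝ) 1) G ∧
      ∀ w ∈ Ioo (0:ℝ) 1, 0 < G w := by
  obtain ⟨hγ1, hγ2⟩ := abs_lt.mp hγ
  have hs : Real.sqrt (1 - γ^2) ^ 2 = 1 - γ^2 := Real.sq_sqrt (by nlinarith)
  have hcγ : γ^2 / 4 < Γ * (1 - Γ) := by nlinarith [Real.sqrt_nonneg (1 - γ^2)]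
  set c := Γ * (1 - Γ) with hc
  set φ : ℝ → ℝ := fun x => c * (1 + -(x^2)⁻¹) - 1/4 * (γ * x^(γ-1) + -γ * x^(-γ-1)) with hφ
  set ψ : ℝ → ℝ := fun x =>
    c * (2 * (x^3)⁻¹) - 1/4 * (γ*(γ-1) * x^(γ-2) + γ*(γ+1) * x^(-γ-2)) with hψ
  have hG' : ∀ x ∈ Ioi (0:ℝ), HasDerivAt G (φ x) x := by
    intro x hx
    have hx0 : x ≠ 0 := ne_of_gt hx
    rw [hG]
    have h1 : HasDerivAt (fun w : ℝ => w - 2 + w⁻¹) (1 + -(x^2)⁻¹) x :=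
      ((hasDerivAt_id x).sub_const 2).add (hasDerivAt_inv hx0)
    have h2 : HasDerivAt (fun w : ℝ => w ^ γ - 2 + w ^ (-γ))
        (γ * x^(γ-1) + -γ * x^(-γ-1)) x :=
      ((rpow_deriv (p := γ) hx).sub_const 2).add (rpow_deriv (p := -γ) hx)
    exact (h1.const_mul c).sub (h2.const_mul (1/4))
  have hφ1 : φ 1 = 0 := by
    simp [hφ, Real.one_rpow]
  have hφ' : ∀ x ∈ Ioi (0:ℝ), HasDerivAt φ (ψ x) x := by
    intro x hx
    have hx0 : x ≠ 0 := ne_of_gt hx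
    have hinv := (hasDerivAt_pow 2 x).inv (pow_ne_zero 2 hx0)
    have h1 := (hasDerivAt_const x (1:ℝ)).add hinv.neg
    have h2 := ((rpow_deriv (p := γ-1) hx).const_mul γ).add
      ((rpow_deriv (p := -γ-1) hx).const_mul (-γ))
    have h := (h1.const_mul c).sub (h2.const_mul (1/4 : ℝ))
    have e1 : γ - 1 - 1 = γ - 2 := by ring
    have e2 : -γ - 1 - 1 = -γ - 2 := by ring
    rw [e1, e2] at h
    refine h.congr_deriv ?_
    rw [hψ]
    field_simp
    ring
  have hψpos : ∀ x ∈ Ioc (0:ℝ) 1, 0 < ψ x := by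
    intro x hx
    have hx0 : (0:ℝ) < x := hx.1
    have hkey := key_ineq hγ hx
    have hx3 : (0:ℝ) < x^3 := by positivity
    have e1 : x ^ (γ-2) * x ^ (3:ℕ) = x ^ (1+γ) := by
      rw [← Real.rpow_natCast x 3, ← Real.rpow_add hx0]
      congr 1
      push_cast; ring
    have e2 : x ^ (-γ-2) * x ^ (3:ℕ) = x ^ (1-γ) := by
      rw [← Real.rpow_natCast x 3, ← Real.rpow_add hx0]
      congr 1
      push_cast; ring
    have hval : ψ x * (4*x^3) = 8*c - (γ*(γ-1)*x^(1+γ) + γ*(γ+1)*x^(1-γ)) := by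
      have hinv3 : (x^3)⁻¹ * x^3 = 1 := inv_mul_cancel₀ hx3.ne'
      simp only [hψ]
      linear_combination (-γ*(γ-1))*e1 + (-γ*(γ+1))*e2 + 8*c*hinv3
    have h8 : 2*γ^2 < 8*c := by nlinarith
    have hpos : 0 < ψ x * (4*x^3) := by rw [hval]; nlinarith
    by_contra hcon
    push_neg at hcon
    nlinarith
  have hGcont : ContinuousOn G (Ioc (0:ℝ) 1) := fun x hx =>
    (hG' x hx.1).differentiableAt.continuousAt.continuousWithinAt
  have hG1 : G 1 = 0 := by
    rw [hG]; norm_num [Real.one_rpow]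
  have hdG1 : deriv G 1 = 0 := by
    rw [(hG' 1 (by norm_num)).deriv, hφ1]
  have hconv : StrictConvexOn ℝ (Ioc (0:ℝ) 1) G := by
    apply strictConvexOn_of_deriv2_pos (convex_Ioc 0 1) hGcont
    rw [interior_Ioc]
    intro x hx
    have hEq : deriv G =ᶠ[nhds x] φ := by
      filter_upwards [isOpen_Ioi.mem_nhds hx.1] with y hy
      exact (hG' y hy).deriv
    show 0 < deriv (deriv G) x
    rw [hEq.deriv_eq, (hφ' x hx.1).deriv]
    exact hψpos x ⟨hx.1, hx.2.le⟩
  refine ⟨hG1, hdG1, hconv, ?_⟩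
  have hmono : StrictMonoOn φ (Ioc (0:ℝ) 1) := by
    apply strictMonoOn_of_deriv_pos (convex_Ioc 0 1)
    · intro y hy
      exact (hφ' y hy.1).differentiableAt.continuousAt.continuousWithinAt
    · rw [interior_Ioc]
      intro y hy
      rw [(hφ' y hy.1).deriv]
      exact hψpos y ⟨hy.1, hy.2.le⟩
  have hanti : StrictAntiOn G (Ioc (0:ℝ) 1) := by
    apply strictAntiOn_of_deriv_neg (convex_Ioc 0 1) hGcont
    rw [interior_Ioc]
    intro x hx
    rw [(hG' x hx.1).deriv]
    have := hmono ⟨hx.1, hx.2.le⟩ (right_mem_Ioc.mpr one_pos) hx.2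
    linarith [hφ1]
  intro w hw
  have := hanti ⟨hw.1, hw.2.le⟩ (right_mem_Ioc.mpr one_pos) hw.2
  rw [hG1] at this
  exact this
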